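/- (Ascending Landen transformation in dn.) Let k ∈ ℂ, let (S, C, D) be a Jacobi triple with modulus k, let ε ∈ {1, −1}, and let β, γ, η ∈ ℂ with β² = 1 − k, β ≠ 0, ε − β ≠ 0, γ² = εβ, γ ≠ 0, η² = ε, and set δ = ε·η·γ (so δ² = β). Writing w = z/(2γ), on the open set U = { z ∈ ℂ : D(w) ≠ 0 }, the triple (z ↦ −(ε·D(w) − β/D(w))/(ε − β), z ↦ (β + ε)·S(w)·C(w)/D(w), z ↦ ε·η·(ε·D(w) + β/D(w))/(2δ)) satisfies system (1) with modulus −ε·(β − ε)²/(4β). (This is sn(2√(ε√(1−k)) x + φ | −ε(√(1−k)−ε)²/(4√(1−k))) = −(ε dn − √(1−k) nd)/(ε − √(1−k)), with the corresponding cn and dn formulas.) -/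

import Mathlib

/-- A Jacobi triple with modulus `k`: the model is `(sn(·|k), cn(·|k), dn(·|k))`. -/
def IsJacobiTriple (k : ℂ) (S C D : ℂ → ℂ) : Prop :=
  ∀ z : ℂ, HasDerivAt S (C z * D z) z ∧ HasDerivAt C (-(S z * D z)) z ∧
    HasDerivAt D (-(k * S z * C z)) z ∧
    S z ^ 2 + C z ^ 2 = 1 ∧ D z ^ 2 + k * S z ^ 2 = 1

/-- A triple `(St, Ct, Dt)` satisfies system (1) with modulus `m` on `U`:
at every point of `U` the functions are differentiable with `St′ = Ct·Dt`,
and `St² + Ct² = 1` and `Dt² + m·St² = 1` hold on `U`. -/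
def SatisfiesSystem1 (m : ℂ) (St Ct Dt : ℂ → ℂ) (U : Set ℂ) : Prop :=
  ∀ z ∈ U, HasDerivAt St (Ct z * Dt z) z ∧
    DifferentiableAt ℂ Ct z ∧ DifferentiableAt ℂ Dt z ∧
    St z ^ 2 + Ct z ^ 2 = 1 ∧ Dt z ^ 2 + m * St z ^ 2 = 1

theorem stmt_10 (k : ℂ) (S C D : ℂ → ℂ) (hJ : IsJacobiTriple k S C D)
    (ε : ℂ) (hε : ε = 1 ∨ ε = -1)
    (β γ η δ : ℂ) (hβ : β ^ 2 = 1 - k) (hβ0 : β ≠ 0) (hεβ : ε - β ≠ 0)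
    (hγ : γ ^ 2 = ε * β) (hγ0 : γ ≠ 0) (hη : η ^ 2 = ε) (hδ : δ = ε * η * γ) :
    SatisfiesSystem1 (-ε * (β - ε) ^ 2 / (4 * β))
      (fun z => -(ε * D (z / (2 * γ)) - β / D (z / (2 * γ))) / (ε - β))
      (fun z => (β + ε) * S (z / (2 * γ)) * C (z / (2 * γ)) / D (z / (2 * γ)))
      (fun z => ε * η * (ε * D (z / (2 * γ)) + β / D (z / (2 * γ))) / (2 * δ))
      {z : ℂ | D (z / (2 * γ)) ≠ 0} := by
  subst hδ
  have hε2 : ε ^ 2 = 1 := by rcases hε with h | h <;> simp [h]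
  have hε0 : ε ≠ 0 := by rcases hε with h | h <;> simp [h]
  have hη0 : η ≠ 0 := by
    intro h; apply hε0; rw [← hη, h]; ring
  intro z hz
  simp only [Set.mem_setOf_eq] at hz
  obtain ⟨hS', hC', hD', hSC, hDk⟩ := hJ (z / (2 * γ))
  set w := z / (2 * γ) with hw
  have hinner : HasDerivAt (fun z : ℂ => z / (2 * γ)) (1 / (2 * γ)) z := by
    simpa using (hasDerivAt_id z).div_const (2 * γ)
  have hDw : HasDerivAt (fun z : ℂ => D (z / (2 * γ)))
      (-(k * S w * C w) * (1 / (2 * γ))) z := hD'.comp z hinner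
  have hSw : HasDerivAt (fun z : ℂ => S (z / (2 * γ)))
      (C w * D w * (1 / (2 * γ))) z := hS'.comp z hinner
  have hCw : HasDerivAt (fun z : ℂ => C (z / (2 * γ)))
      (-(S w * D w) * (1 / (2 * γ))) z := hC'.comp z hinner
  have h1 : ∀ X : ℂ, ε * η * X / (2 * (ε * η * γ)) = X / (2 * γ) := by
    intro X
    rw [show (2 : ℂ) * (ε * η * γ) = ε * η * (2 * γ) by ring,
      mul_div_mul_left _ _ (mul_ne_zero hε0 hη0)]
  refine ⟨?_, ?_, ?_, ?_, ?_⟩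
  · -- derivative of St equals Ct * Dt
    have hSt : HasDerivAt
        (fun z : ℂ => -(ε * D (z / (2 * γ)) - β / D (z / (2 * γ))) / (ε - β))
        (-(ε * (-(k * S w * C w) * (1 / (2 * γ))) -
            (0 * D w - β * (-(k * S w * C w) * (1 / (2 * γ)))) / D w ^ 2) / (ε - β)) z :=
      (((hDw.const_mul ε).sub ((hasDerivAt_const z β).div hDw hz)).neg).div_const (ε - β)
    convert hSt using 1
    show (β + ε) * S w * C w / D w * (ε * η * (ε * D w + β / D w) / (2 * (ε * η * γ))) = _
    rw [h1, eq_div_iff hεβ]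
    field_simp [hz, hγ0]
    linear_combination
      ((1) * (β) * (S w) * (C w) + (1) * (ε) * (S w) * (C w) * (D w)^2) * hε2
      + ((-1) * (β)^2 * (ε) * (S w) * (C w) + (-1) * (k) * (ε) * (S w) * (C w) + (1) * (ε) * (S w) * (C w)) * hDk
      + ((-1) * (β) * (S w) * (C w) + (-1) * (ε) * (S w) * (C w) + (1) * (k) * (ε) * (S w)^3 * (C w)) * hβ
  · exact (((hSw.const_mul (β + ε)).mul hCw).div hDw hz).differentiableAt
  · exact ((((hDw.const_mul ε).add ((hasDerivAt_const z β).div hDw hz)).const_mul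
      (ε * η)).div_const (2 * (ε * η * γ))).differentiableAt
  · show (-(ε * D w - β / D w) / (ε - β)) ^ 2 + ((β + ε) * S w * C w / D w) ^ 2 = 1
    field_simp [hz, hεβ]
    linear_combination
      ((-1) * (D w)^2 + (1) * (D w)^4 + (-2) * (β)^2 * (S w)^2 * (C w)^2 + (1) * (ε)^2 * (S w)^2 * (C w)^2 + (1) * (S w)^2 * (C w)^2) * hε2
      + ((1) * (β)^4 * (S w)^2 + (-2) * (β)^2 * (S w)^2 + (1) * (S w)^2) * hSC
      + ((-1) * (β)^2 + (1) * (D w)^2 + (-1) * (k) * (S w)^2) * hDk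
      + ((β^2 - 1) * (S w)^2 + (k + 1 - β^2) * (S w)^4) * hβ
      + ((1) * (β)^2 * (S w)^2 + (-1) * (S w)^2 + (1) * (k) * (S w)^4 + (1) * (S w)^4 + (-1) * (β)^2 * (S w)^4) * hβ
      + ((-1) * (β)^2 * (S w)^2 + (1) * (S w)^2 + (-1) * (k) * (S w)^4 + (-1) * (S w)^4 + (1) * (β)^2 * (S w)^4) * hβ
  · show (ε * η * (ε * D w + β / D w) / (2 * (ε * η * γ))) ^ 2 +
      -ε * (β - ε) ^ 2 / (4 * β) * (-(ε * D w - β / D w) / (ε - β)) ^ 2 = 1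
    rw [h1]
    field_simp [hz, hβ0, hεβ, hγ0]
    linear_combination
      ((-16) * (β) * (ε)^2 * (D w)^2 + (8) * (β) * (ε)^4 * (D w)^2 + (8) * (β) * (ε)^4 * (D w)^4 + (32) * (β)^2 * (ε) * (D w)^2 + (-16) * (β)^2 * (ε)^3 * (D w)^2 + (-4) * (β)^2 * (ε)^3 * (D w)^4 + (-4) * (β)^2 * (ε)^3 + (8) * (β)^3 * (ε)^2 * (D w)^2 + (8) * (β)^3 * (ε)^2 + (-16) * (β)^3 * (D w)^2 + (-4) * (β)^4 * (ε) + (-4) * (ε)^5 * (D w)^4) * hγ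
      + ((8) * (β)^2 * (ε)^3 * (D w)^2 + (8) * (β)^2 * (ε)^3 * (D w)^4 + (-16) * (β)^3 * (ε)^2 * (D w)^2 + (-4) * (β)^3 * (ε)^2 * (D w)^4 + (-4) * (β)^3 * (ε)^2 + (8) * (β)^4 * (ε) * (D w)^2 + (8) * (β)^4 * (ε) + (-4) * (β)^5 + (-4) * (β) * (ε)^4 * (D w)^4) * hε2
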